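/- Let n ≥ 1 and k ≤ n, and let A and B be n×n positive semidefinite Hermitian complex matrices such that rank(A) ≤ k, every eigenvalue of A is at most c, and every eigenvalue of B is at most μ, where c ≥ 0 and μ ≥ 0 are real. Then det(A + B) ≤ (c + μ)^k · μ^{n−k}, where the determinant of the positive semidefinite matrix A+B is interpreted as a nonnegative real number. -/

import Mathlib

open Matrix
open scoped ComplexOrder

namespace DetBoundAux

variable {n : ℕ}

lemma eigvec_apply {M : Matrix (Fin n) (Fin n) ℂ} (hM : M.IsHermitian) (j : Fin n) :
    Matrix.toEuclideanLin M (hM.eigenvectorBasis j) =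
      (hM.eigenvalues j : ℂ) • hM.eigenvectorBasis j := by
  apply (WithLp.equiv 2 (Fin n → ℂ)).injective
  have h := hM.mulVec_eigenvectorBasis j
  rw [show (WithLp.equiv 2 (Fin n → ℂ)) (Matrix.toEuclideanLin M (hM.eigenvectorBasis j)) = M *ᵥ (WithLp.equiv 2 (Fin n → ℂ)) (hM.eigenvectorBasis j) from rfl]
  rw [show (WithLp.equiv 2 (Fin n → ℂ)) ((hM.eigenvalues j : ℂ) • hM.eigenvectorBasis j)
    = (hM.eigenvalues j : ℂ) • (WithLp.equiv 2 (Fin n → ℂ)) (hM.eigenvectorBasis j) from rfl]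
  rw [show ((WithLp.equiv 2 (Fin n → ℂ)) (hM.eigenvectorBasis j) : Fin n → ℂ)
    = ⇑(hM.eigenvectorBasis j) from rfl]
  rw [h, RCLike.real_smul_eq_coe_smul (K := ℂ)]
  rfl

lemma inner_toEuclideanLin {M : Matrix (Fin n) (Fin n) ℂ} (hM : M.IsHermitian)
    (x : EuclideanSpace ℂ (Fin n)) :
    (inner ℂ x (Matrix.toEuclideanLin M x) : ℂ) =
      ((∑ j, hM.eigenvalues j * ‖hM.eigenvectorBasis.repr x j‖ ^ 2 : ℝ) : ℂ) := by
  set v := hM.eigenvectorBasis with hv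
  have hx : Matrix.toEuclideanLin M x
      = ∑ j, v.repr x j • ((hM.eigenvalues j : ℂ) • v j) := by
    conv_lhs => rw [← v.sum_repr x]
    rw [map_sum]
    exact Finset.sum_congr rfl fun j _ => by rw [_root_.map_smul, eigvec_apply hM j]
  rw [hx, inner_sum]
  push_cast
  refine Finset.sum_congr rfl fun j _ => ?_
  rw [inner_smul_right, inner_smul_right, ← inner_conj_symm, ← v.repr_apply_apply]
  have : (starRingEnd ℂ) (v.repr x j) * v.repr x j = ((‖v.repr x j‖ : ℂ)) ^ 2 := by
    rw [RCLike.conj_mul]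
    norm_cast
  linear_combination (hM.eigenvalues j : ℂ) * this

lemma norm_sq_eq_sum {M : Matrix (Fin n) (Fin n) ℂ} (hM : M.IsHermitian)
    (x : EuclideanSpace ℂ (Fin n)) :
    ‖x‖ ^ 2 = ∑ j, ‖hM.eigenvectorBasis.repr x j‖ ^ 2 := by
  have h1 : ‖hM.eigenvectorBasis.repr x‖ = ‖x‖ :=
    LinearIsometryEquiv.norm_map _ x
  rw [← h1, EuclideanSpace.norm_eq, Real.sq_sqrt]
  exact Finset.sum_nonneg fun j _ => sq_nonneg _

lemma re_inner_le {M : Matrix (Fin n) (Fin n) ℂ} (hM : M.IsHermitian) {t : ℝ}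
    (ht : ∀ i, hM.eigenvalues i ≤ t) (x : EuclideanSpace ℂ (Fin n)) :
    Complex.re (inner ℂ x (Matrix.toEuclideanLin M x)) ≤ t * ‖x‖ ^ 2 := by
  rw [inner_toEuclideanLin hM, Complex.ofReal_re, norm_sq_eq_sum hM, Finset.mul_sum]
  exact Finset.sum_le_sum fun j _ => mul_le_mul_of_nonneg_right (ht j) (sq_nonneg _)

end DetBoundAux

open DetBoundAux in
/-- Weyl-type determinant bound: if `A, B` are `n × n` positive semidefinite Hermitian
matrices, `rank A ≤ k`, the eigenvalues of `A` are at most `c` and those of `B` are at most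
`μ`, then `det (A + B) ≤ (c + μ)^k * μ^(n-k)` (the determinant being a nonnegative real). -/
theorem det_add_le_of_rank_le_of_eigenvalues_le
    {n k : ℕ} (hn : 1 ≤ n) (hk : k ≤ n)
    (A B : Matrix (Fin n) (Fin n) ℂ)
    (hA : A.PosSemidef) (hB : B.PosSemidef)
    (c μ : ℝ) (hc : 0 ≤ c) (hμ : 0 ≤ μ)
    (hrank : A.rank ≤ k)
    (hAeig : ∀ i, hA.1.eigenvalues i ≤ c)
    (hBeig : ∀ i, hB.1.eigenvalues i ≤ μ) :
    ∃ d : ℝ, 0 ≤ d ∧ (A + B).det = (d : ℂ) ∧ d ≤ (c + μ) ^ k * μ ^ (n - k) := by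
  classical
  have hAB : (A + B).PosSemidef := hA.add hB
  have hH : (A + B).IsHermitian := hAB.1
  set e : Fin n → ℝ := hH.eigenvalues with he
  set v := hH.eigenvectorBasis with hv
  have he0 : ∀ i, 0 ≤ e i := fun i => hAB.eigenvalues_nonneg i
  refine ⟨∏ i, e i, Finset.prod_nonneg fun i _ => he0 i, ?_, ?_⟩
  · rw [hH.det_eq_prod_eigenvalues]; norm_cast
  set S : Finset (Fin n) := Finset.univ.filter (fun i => μ < e i) with hS
  -- every eigenvalue of A + B is at most c + μ
  have he_le : ∀ i, e i ≤ c + μ := by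
    intro i
    have h1 : (e i : ℂ) = inner ℂ (v i) (Matrix.toEuclideanLin (A + B) (v i)) := by
      rw [inner_toEuclideanLin hH (v i)]
      norm_cast
      rw [show v.repr (v i) = EuclideanSpace.single i (1 : ℂ) from v.repr_self i]
      simp [EuclideanSpace.single_apply, apply_ite]
      rfl
    have hnorm : ‖(v i : EuclideanSpace ℂ (Fin n))‖ = 1 := v.orthonormal.1 i
    have hAq := re_inner_le hA.1 hAeig (v i)
    have hBq := re_inner_le hB.1 hBeig (v i)
    rw [hnorm, one_pow, mul_one] at hAq hBq
    have h2 : e i = Complex.re (inner ℂ (v i) (Matrix.toEuclideanLin (A + B) (v i))) := by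
      rw [← h1, Complex.ofReal_re]
    rw [h2, map_add, LinearMap.add_apply, inner_add_right, Complex.add_re]
    linarith
  -- at most k eigenvalues of A + B exceed μ
  have hcard : S.card ≤ k := by
    by_contra hlt
    push_neg at hlt
    set g : (↥S → ℂ) →ₗ[ℂ] EuclideanSpace ℂ (Fin n) :=
      ∑ i : ↥S, (LinearMap.proj i).smulRight (v i) with hg
    set φ : (↥S → ℂ) →ₗ[ℂ] (Fin n → ℂ) :=
      A.mulVecLin ∘ₗ ((WithLp.linearEquiv 2 ℂ (Fin n → ℂ)).toLinearMap ∘ₗ g) with hφ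
    have hkerφ : LinearMap.ker φ ≠ ⊥ := by
      intro hbot
      have h1 := LinearMap.finrank_range_add_finrank_ker φ
      rw [hbot, finrank_bot, add_zero] at h1
      have h2 : Module.finrank ℂ (LinearMap.range φ) ≤ A.rank := by
        rw [Matrix.rank]
        exact Submodule.finrank_mono (LinearMap.range_comp_le_range _ _)
      rw [Module.finrank_fintype_fun_eq_card, Fintype.card_coe] at h1
      omega
    obtain ⟨c0, hc0mem, hc0ne⟩ := (Submodule.ne_bot_iff _).mp hkerφ
    set x : EuclideanSpace ℂ (Fin n) := g c0 with hxdef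
    have hgc : x = ∑ i : ↥S, c0 i • v ↑i := by
      rw [hxdef, hg]
      simp [LinearMap.sum_apply, LinearMap.smulRight_apply, LinearMap.proj_apply]
    have hTAx : Matrix.toEuclideanLin A x = 0 := by
      have h0 : A *ᵥ (WithLp.equiv 2 (Fin n → ℂ) x) = 0 := by
        have hmem := hc0mem
        rw [LinearMap.mem_ker] at hmem
        simpa [hφ, Matrix.mulVecLin_apply] using hmem
      rw [Matrix.toEuclideanLin_apply, show A *ᵥ x.ofLp = 0 from h0]
      simp
    have hxr : ∀ j : Fin n, v.repr x j = if h : j ∈ S then c0 ⟨j, h⟩ else 0 := by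
      intro j
      have hxj : v.repr x j = ∑ i : ↥S, c0 i * (if j = (i : Fin n) then 1 else 0) := by
        rw [v.repr_apply_apply, hgc, inner_sum]
        refine Finset.sum_congr rfl fun i _ => ?_
        rw [inner_smul_right, orthonormal_iff_ite.mp v.orthonormal j (i : Fin n)]
      rw [hxj]
      by_cases h : j ∈ S
      · rw [dif_pos h, Finset.sum_eq_single (⟨j, h⟩ : ↥S)]
        · simp
        · intro i _ hne
          rw [if_neg, mul_zero]
          intro hji
          exact hne (Subtype.ext hji.symm)
        · intro habs; exact absurd (Finset.mem_univ _) habs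
      · rw [dif_neg h]
        apply Finset.sum_eq_zero
        intro i _
        rw [if_neg, mul_zero]
        intro hji
        exact h (hji ▸ i.2)
    obtain ⟨j0, hj0⟩ := Function.ne_iff.mp hc0ne
    have hsum1 : Complex.re (inner ℂ x (Matrix.toEuclideanLin (A + B) x))
        = ∑ j, e j * ‖v.repr x j‖ ^ 2 := by
      rw [inner_toEuclideanLin hH x, Complex.ofReal_re]
    have hsum2 : Complex.re (inner ℂ x (Matrix.toEuclideanLin (A + B) x))
        ≤ μ * ∑ j, ‖v.repr x j‖ ^ 2 := by
      have hsplit : Matrix.toEuclideanLin (A + B) x = Matrix.toEuclideanLin B x := by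
        rw [map_add, LinearMap.add_apply, hTAx, zero_add]
      rw [hsplit]
      have hle := re_inner_le hB.1 hBeig x
      rwa [norm_sq_eq_sum hH x] at hle
    have hstrict : μ * ∑ j, ‖v.repr x j‖ ^ 2 < ∑ j, e j * ‖v.repr x j‖ ^ 2 := by
      rw [Finset.mul_sum]
      apply Finset.sum_lt_sum
      · intro j _
        by_cases hj : j ∈ S
        · exact mul_le_mul_of_nonneg_right (Finset.mem_filter.mp hj).2.le (sq_nonneg _)
        · rw [hxr j, dif_neg hj]; simp
      · refine ⟨(j0 : Fin n), Finset.mem_univ _, ?_⟩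
        have hj0S : (j0 : Fin n) ∈ S := j0.2
        have h1 : μ < e (j0 : Fin n) := (Finset.mem_filter.mp hj0S).2
        have h2 : v.repr x (j0 : Fin n) = c0 j0 := by
          rw [hxr, dif_pos hj0S]
        have h3 : 0 < ‖v.repr x (j0 : Fin n)‖ ^ 2 := by
          rw [h2]
          exact pow_pos (norm_pos_iff.mpr hj0) 2
        exact mul_lt_mul_of_pos_right h1 h3
    linarith
  -- final product bound
  have hSc : Sᶜ.card = n - S.card := by
    rw [Finset.card_compl, Fintype.card_fin]
  have hcμ : 0 ≤ c + μ := by linarith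
  calc ∏ i, e i = (∏ i ∈ S, e i) * ∏ i ∈ Sᶜ, e i := (Finset.prod_mul_prod_compl S e).symm
    _ ≤ (c + μ) ^ S.card * μ ^ (n - S.card) := by
        have hp1 : ∏ i ∈ S, e i ≤ (c + μ) ^ S.card := by
          rw [← Finset.prod_const]
          exact Finset.prod_le_prod (fun i _ => he0 i) (fun i _ => he_le i)
        have hp2 : ∏ i ∈ Sᶜ, e i ≤ μ ^ (n - S.card) := by
          rw [← hSc, ← Finset.prod_const]
          refine Finset.prod_le_prod (fun i _ => he0 i) (fun i hi => ?_)
          have hni : ¬ μ < e i := fun hlt =>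
            (Finset.mem_compl.mp hi) (Finset.mem_filter.mpr ⟨Finset.mem_univ _, hlt⟩)
          linarith
        exact mul_le_mul hp1 hp2 (Finset.prod_nonneg fun i _ => he0 i) (pow_nonneg hcμ _)
    _ ≤ (c + μ) ^ k * μ ^ (n - k) := by
        have h2 : μ ^ (k - S.card) ≤ (c + μ) ^ (k - S.card) :=
          pow_le_pow_left₀ hμ (by linarith) _
        calc (c + μ) ^ S.card * μ ^ (n - S.card)
            = ((c + μ) ^ S.card * μ ^ (k - S.card)) * μ ^ (n - k) := by
              rw [mul_assoc, ← pow_add]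
              congr 2
              omega
          _ ≤ ((c + μ) ^ S.card * (c + μ) ^ (k - S.card)) * μ ^ (n - k) := by
              apply mul_le_mul_of_nonneg_right _ (pow_nonneg hμ _)
              exact mul_le_mul_of_nonneg_left h2 (pow_nonneg hcμ _)
          _ = (c + μ) ^ k * μ ^ (n - k) := by
              rw [← pow_add]
              congr 2
              omega
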